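/- Suppose dim K^(m)(A,b) = m. Then the PLS estimator satisfies β̂_PLS^(m) = π^(m)(A)·b, where π^(m) is the polynomial such that π^(m)(T^(m)) = (T^(m))⁻ (Moore–Penrose inverse), i.e., λ·π^(m)(λ) = 1 - ∏_{i=1}^m (1 - λ/μ_i^(m)) with μ_i^(m) the nonzero eigenvalues of T^(m). -/

import Mathlib

open Matrix

/-- The Krylov space `K^(m)(A, b) = span(b, Ab, ..., A^{m-1} b)`. -/
def Krylov {p : ℕ} (A : Matrix (Fin p) (Fin p) ℝ) (b : Fin p → ℝ) (m : ℕ) :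
    Submodule ℝ (Fin p → ℝ) :=
  Submodule.span ℝ {v | ∃ j < m, v = (A ^ j).mulVec b}

lemma aeval_conj_diag {m : ℕ} (U T : Matrix (Fin m) (Fin m) ℝ) (d : Fin m → ℝ)
    (hUU : U * star U = 1) (hU'U : star U * U = 1)
    (hspec : T = U * Matrix.diagonal d * star U) (q : Polynomial ℝ) :
    Polynomial.aeval T q = U * Matrix.diagonal (fun i => q.eval (d i)) * star U := by
  induction q using Polynomial.induction_on' with
  | add p r hp hr =>
      have hd : (Matrix.diagonal fun i => (p + r).eval (d i))
          = (Matrix.diagonal fun i => p.eval (d i)) + (Matrix.diagonal fun i => r.eval (d i)) := by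
        ext i j
        rcases eq_or_ne i j with rfl | h
        · simp
        · simp [Matrix.diagonal_apply_ne _ h]
      rw [map_add, hp, hr, hd, mul_add, add_mul]
  | monomial n a =>
      have hpow : T ^ n = U * (Matrix.diagonal d) ^ n * star U := by
        induction n with
        | zero => simp [hUU]
        | succ k ih =>
            rw [pow_succ, ih, hspec]
            have : U * Matrix.diagonal d ^ k * star U * (U * Matrix.diagonal d * star U)
                = U * Matrix.diagonal d ^ k * ((star U * U) * (Matrix.diagonal d * star U)) := by
              simp only [mul_assoc]
            rw [this, hU'U, one_mul, pow_succ]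
            simp only [mul_assoc]
      have hd : (fun i => (Polynomial.monomial n a).eval (d i)) = fun i => a * (d i) ^ n := by
        funext i; simp [Polynomial.eval_monomial]
      rw [Polynomial.aeval_monomial, hpow, hd]
      have hd2 : (Matrix.diagonal fun i => a * d i ^ n) = a • (Matrix.diagonal d) ^ n := by
        rw [Matrix.diagonal_pow]
        ext i j
        rcases eq_or_ne i j with rfl | h
        · simp
        · simp [Matrix.diagonal_apply_ne _ h]
      rw [hd2]
      simp [Algebra.algebraMap_eq_smul_one, smul_mul_assoc, mul_smul_comm]

lemma aeval_herm {m : ℕ} (T : Matrix (Fin m) (Fin m) ℝ) (hTh : T.IsHermitian) (q : Polynomial ℝ) :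
    Polynomial.aeval T q = (hTh.eigenvectorUnitary : Matrix (Fin m) (Fin m) ℝ)
      * Matrix.diagonal (fun i => q.eval (hTh.eigenvalues i))
      * star (hTh.eigenvectorUnitary : Matrix (Fin m) (Fin m) ℝ) :=
  aeval_conj_diag _ T _ ((Matrix.mem_unitaryGroup_iff).mp (hTh.eigenvectorUnitary).2)
    ((Matrix.mem_unitaryGroup_iff').mp (hTh.eigenvectorUnitary).2) hTh.spectral_theorem q

lemma my_sum_mulVec {k l : Type*} [Fintype k] [Fintype l] [DecidableEq k]
    (s : Finset ℕ) (f : ℕ → Matrix k l ℝ) (v : l → ℝ) :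
    (∑ i ∈ s, f i).mulVec v = ∑ i ∈ s, (f i).mulVec v := by
  classical
  induction s using Finset.induction_on with
  | empty => simp [Matrix.zero_mulVec]
  | insert _ _ h ih => rw [Finset.sum_insert h, Finset.sum_insert h, Matrix.add_mulVec, ih]

lemma my_mulVec_sum {k l : Type*} [Fintype l] (s : Finset ℕ) (M : Matrix k l ℝ)
    (f : ℕ → l → ℝ) :
    M.mulVec (∑ i ∈ s, f i) = ∑ i ∈ s, M.mulVec (f i) := by
  classical
  induction s using Finset.induction_on with
  | empty => simp [Matrix.mulVec_zero]
  | insert _ _ h ih => rw [Finset.sum_insert h, Finset.sum_insert h, Matrix.mulVec_add, ih]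

theorem pls_estimator_poly {n p m : ℕ} (X : Matrix (Fin n) (Fin p) ℝ) (y : Fin n → ℝ)
    (A : Matrix (Fin p) (Fin p) ℝ) (hA : A = Xᵀ * X)
    (b : Fin p → ℝ) (hb : b = Xᵀ.mulVec y)
    (hdim : Module.finrank ℝ (Krylov A b m) = m)
    (W : Matrix (Fin p) (Fin m) ℝ) (hWorth : Wᵀ * W = 1)
    (hWspan : Submodule.span ℝ (Set.range Wᵀ) = Krylov A b m)
    (T : Matrix (Fin m) (Fin m) ℝ) (hT : T = Wᵀ * A * W) (hTh : T.IsHermitian)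
    (π : Polynomial ℝ)
    (hπ : ∀ x : ℝ, x * π.eval x =
      1 - ∏ i ∈ Finset.univ.filter (fun i => hTh.eigenvalues i ≠ 0),
        (1 - x / hTh.eigenvalues i))
    (Tpinv : Matrix (Fin m) (Fin m) ℝ)
    (h1 : (T * Tpinv)ᵀ = T * Tpinv) (h2 : (Tpinv * T)ᵀ = Tpinv * T)
    (h3 : T * Tpinv * T = T) (h4 : Tpinv * T * Tpinv = Tpinv) :
    W.mulVec (Tpinv.mulVec (Wᵀ.mulVec b)) = (Polynomial.aeval A π).mulVec b := by
  -- trivial case m = 0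
  rcases Nat.eq_zero_or_pos m with rfl | hm
  · have hπ0 : π = 0 := by
      apply Polynomial.eq_zero_of_infinite_isRoot
      apply Set.Infinite.mono (s := {x : ℝ | x ≠ 0})
      · intro x hx
        have := hπ x
        simp only [Finset.univ_eq_empty, Finset.filter_empty, Finset.prod_empty, sub_self] at this
        have := mul_eq_zero.mp this
        simp only [Polynomial.IsRoot, Set.mem_setOf_eq]
        tauto
      · exact Set.infinite_of_injective_forall_mem (f := fun t : ℕ => (t : ℝ) + 1)
          (by intro a b hab; simpa using hab)
          (by intro t; simp only [Set.mem_setOf_eq]; positivity)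
    subst hπ0
    simp only [map_zero, Matrix.zero_mulVec]
    funext i
    simp [Matrix.mulVec, dotProduct]
  -- basic symmetry facts
  have hAsym : Aᵀ = A := by rw [hA]; simp [Matrix.transpose_mul, mul_assoc]
  -- Krylov membership and projection
  have hKry : ∀ j, j < m → (A ^ j).mulVec b ∈ Krylov A b m := fun j hj =>
    Submodule.subset_span ⟨j, hj, rfl⟩
  have hKrange : ∀ u ∈ Krylov A b m, ∃ c, u = W.mulVec c := by
    intro u hu
    rw [← hWspan] at hu
    change u ∈ Submodule.span ℝ (Set.range W.col) at hu
    rw [← Matrix.range_mulVecLin] at hu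
    obtain ⟨c, hc⟩ := hu
    exact ⟨c, hc.symm⟩
  have hproj : ∀ u ∈ Krylov A b m, W.mulVec (Wᵀ.mulVec u) = u := by
    intro u hu
    obtain ⟨c, rfl⟩ := hKrange u hu
    have hc : Wᵀ.mulVec (W.mulVec c) = c := by
      rw [Matrix.mulVec_mulVec, hWorth, Matrix.one_mulVec]
    rw [hc]
  -- T has nonzero determinant
  have hdet : T.det ≠ 0 := by
    intro hdet0
    obtain ⟨v, hv0, hv⟩ := (Matrix.exists_mulVec_eq_zero_iff).mpr hdet0
    set w := W.mulVec v with hw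
    have hXw : X.mulVec w = 0 := by
      have h1 : v ⬝ᵥ T.mulVec v = 0 := by rw [hv, dotProduct_zero]
      have hTXW : T = (X * W)ᵀ * (X * W) := by
        rw [hT, hA, Matrix.transpose_mul]
        simp only [Matrix.mul_assoc]
      rw [hTXW, ← Matrix.mulVec_mulVec, Matrix.dotProduct_mulVec, Matrix.vecMul_transpose,
        dotProduct_self_eq_zero, ← Matrix.mulVec_mulVec] at h1
      exact h1
    have hAw : A.mulVec w = 0 := by
      rw [hA, ← Matrix.mulVec_mulVec, hXw, Matrix.mulVec_zero]
    have hgen : ∀ j : ℕ, ((A ^ j).mulVec b) ⬝ᵥ w = 0 := by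
      intro j
      induction j with
      | zero =>
          rw [pow_zero, Matrix.one_mulVec, hb, Matrix.mulVec_transpose,
            ← Matrix.dotProduct_mulVec, hXw, dotProduct_zero]
      | succ k ih =>
          have hwA : w ᵥ* A = 0 := by
            rw [← hAsym, Matrix.vecMul_transpose, hAw]
          rw [pow_succ', ← Matrix.mulVec_mulVec, dotProduct_comm,
            Matrix.dotProduct_mulVec, hwA, zero_dotProduct]
    have hworth : ∀ u ∈ Krylov A b m, u ⬝ᵥ w = 0 := by
      intro u hu
      induction hu using Submodule.span_induction with
      | mem x hx =>
          obtain ⟨j, hj, rfl⟩ := hx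
          exact hgen j
      | zero => exact zero_dotProduct w
      | add x y _ _ hx hy => rw [add_dotProduct, hx, hy, add_zero]
      | smul a x _ hx => rw [smul_dotProduct, hx, smul_zero]
    have hwK : w ∈ Krylov A b m := by
      rw [← hWspan]
      change w ∈ Submodule.span ℝ (Set.range W.col)
      rw [← Matrix.range_mulVecLin]
      exact ⟨v, rfl⟩
    have hw0 : w = 0 := dotProduct_self_eq_zero.mp (hworth w hwK)
    apply hv0
    have : (Wᵀ * W).mulVec v = Wᵀ.mulVec w := by rw [← Matrix.mulVec_mulVec]
    rw [hWorth, Matrix.one_mulVec, hw0, Matrix.mulVec_zero] at this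
    exact this
  -- all eigenvalues nonzero
  have heig : ∀ i, hTh.eigenvalues i ≠ 0 := by
    intro i hi
    apply hdet
    rw [hTh.det_eq_prod_eigenvalues]
    refine Finset.prod_eq_zero (Finset.mem_univ i) ?_
    rw [hi]; simp
  -- λ π(λ) = 1 on eigenvalues
  have hμπ : ∀ i, hTh.eigenvalues i * π.eval (hTh.eigenvalues i) = 1 := by
    intro i
    rw [hπ]
    have hz : (∏ j ∈ Finset.univ.filter (fun j => hTh.eigenvalues j ≠ 0),
        (1 - hTh.eigenvalues i / hTh.eigenvalues j)) = 0 := by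
      refine Finset.prod_eq_zero (i := i) (by simp [heig i]) ?_
      rw [div_self (heig i), sub_self]
    rw [hz, sub_zero]
  -- T * π(T) = 1
  set U : Matrix (Fin m) (Fin m) ℝ := (hTh.eigenvectorUnitary : Matrix (Fin m) (Fin m) ℝ) with hU
  have hUU : U * star U = 1 := (Matrix.mem_unitaryGroup_iff).mp (hTh.eigenvectorUnitary).2
  have hTP : T * Polynomial.aeval T π = 1 := by
    have h1 : Polynomial.aeval T (Polynomial.X * π) = T * Polynomial.aeval T π := by
      rw [_root_.map_mul, Polynomial.aeval_X]
    rw [← h1, aeval_herm T hTh]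
    have hd : (Matrix.diagonal fun i => (Polynomial.X * π).eval (hTh.eigenvalues i))
        = (1 : Matrix (Fin m) (Fin m) ℝ) := by
      have : (fun i => (Polynomial.X * π).eval (hTh.eigenvalues i)) = fun _ => (1:ℝ) := by
        funext i
        rw [Polynomial.eval_mul, Polynomial.eval_X, hμπ i]
      rw [this, Matrix.diagonal_one]
    rw [hd, mul_one, hUU]
  have hPT : Polynomial.aeval T π * T = 1 := by
    have h1 : Polynomial.aeval T (Polynomial.X * π) = Polynomial.aeval T π * T := by
      rw [mul_comm Polynomial.X π, _root_.map_mul, Polynomial.aeval_X]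
    have h2 : Polynomial.aeval T (Polynomial.X * π) = T * Polynomial.aeval T π := by
      rw [_root_.map_mul, Polynomial.aeval_X]
    rw [← h1, h2, hTP]
  -- Tpinv = π(T)
  have hTpinv : Tpinv = Polynomial.aeval T π := by
    have e1 : Tpinv = (Polynomial.aeval T π * T) * Tpinv * (T * Polynomial.aeval T π) := by
      rw [hPT, hTP, one_mul, mul_one]
    have e2 : (Polynomial.aeval T π * T) * Tpinv * (T * Polynomial.aeval T π)
        = Polynomial.aeval T π * (T * Tpinv * T) * Polynomial.aeval T π := by
      simp only [mul_assoc]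
    rw [e1, e2, h3, hPT, one_mul]
  -- degree bound
  have hdeg : π.natDegree < m := by
    rcases eq_or_ne π 0 with rfl | hπ0
    · simpa using hm
    have hfil : Finset.univ.filter (fun i => hTh.eigenvalues i ≠ 0) = Finset.univ := by
      apply Finset.filter_true_of_mem
      intro i _
      exact heig i
    set q : Polynomial ℝ :=
      ∏ i : Fin m, (1 - Polynomial.C (hTh.eigenvalues i)⁻¹ * Polynomial.X) with hq
    have hpoly : Polynomial.X * π = 1 - q := by
      apply Polynomial.funext
      intro x
      have := hπ x
      rw [hfil] at this
      simp only [Polynomial.eval_mul, Polynomial.eval_X, Polynomial.eval_sub,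
        Polynomial.eval_one, hq, Polynomial.eval_prod, Polynomial.eval_sub,
        Polynomial.eval_mul, Polynomial.eval_C, Polynomial.eval_one, Polynomial.eval_X]
      rw [this]
      congr 1
      apply Finset.prod_congr rfl
      intro i _
      rw [div_eq_mul_inv, mul_comm]
    have hqdeg : q.natDegree ≤ m := by
      refine le_trans (Polynomial.natDegree_prod_le _ _) ?_
      have : ∀ i : Fin m,
          (1 - Polynomial.C (hTh.eigenvalues i)⁻¹ * Polynomial.X).natDegree ≤ 1 := by
        intro i
        refine le_trans (Polynomial.natDegree_sub_le _ _) ?_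
        simp only [Polynomial.natDegree_one, max_le_iff]
        exact ⟨Nat.zero_le 1, le_trans (Polynomial.natDegree_C_mul_le _ _)
          (le_of_eq Polynomial.natDegree_X)⟩
      refine le_trans (Finset.sum_le_sum fun i _ => this i) ?_
      simp
    have hlhs : (Polynomial.X * π).natDegree = 1 + π.natDegree := by
      rw [Polynomial.natDegree_mul Polynomial.X_ne_zero hπ0, Polynomial.natDegree_X]
    have hrhs : (1 - q).natDegree ≤ m := by
      refine le_trans (Polynomial.natDegree_sub_le _ _) ?_
      simp [hqdeg]
    rw [hpoly] at hlhs
    omega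
  -- transfer lemmas
  have hL2 : ∀ j, j < m → (T ^ j).mulVec (Wᵀ.mulVec b) = Wᵀ.mulVec ((A ^ j).mulVec b) := by
    intro j
    induction j with
    | zero => intro _; simp
    | succ k ih =>
        intro hk
        have hk' : k < m := Nat.lt_of_succ_lt hk
        have e1 : (T ^ (k+1)).mulVec (Wᵀ.mulVec b) = T.mulVec ((T ^ k).mulVec (Wᵀ.mulVec b)) := by
          rw [pow_succ', ← Matrix.mulVec_mulVec]
        have e2 : A.mulVec ((A ^ k).mulVec b) = (A ^ (k+1)).mulVec b := by
          rw [Matrix.mulVec_mulVec, ← pow_succ']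
        rw [e1, ih hk', hT, ← Matrix.mulVec_mulVec, hproj _ (hKry k hk'),
          ← Matrix.mulVec_mulVec, e2]
  have hL3 : ∀ j, j < m → W.mulVec ((T ^ j).mulVec (Wᵀ.mulVec b)) = (A ^ j).mulVec b := by
    intro j hj
    rw [hL2 j hj]
    exact hproj _ (hKry j hj)
  -- final computation
  rw [hTpinv]
  rw [Polynomial.aeval_eq_sum_range (p := π) T, Polynomial.aeval_eq_sum_range (p := π) A,
    my_sum_mulVec, my_sum_mulVec, my_mulVec_sum]
  apply Finset.sum_congr rfl
  intro i hi
  have him : i < m := lt_of_le_of_lt (Nat.lt_succ_iff.mp (Finset.mem_range.mp hi)) hdeg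
  show W.mulVec ((π.coeff i • T ^ i).mulVec (Wᵀ.mulVec b)) = (π.coeff i • A ^ i).mulVec b
  rw [Matrix.smul_mulVec, Matrix.smul_mulVec, Matrix.mulVec_smul, hL3 i him]
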